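/- Let n ≥ 2 and let M be a uniformly random n × n matrix with entries in {−1,+1}. Then P_n ≥ P(D_{11}) ≥ 4·C(n,2)·(1/2)^n − (12·C(n,2)² − 4·C(n,2))·(1/4)^n, where 11 denotes the integer partition with two parts both equal to 1. In particular the probability P_n that M is singular satisfies P_n ≥ 4·C(n,2)·(1/2)^n − (12·C(n,2)² − 4·C(n,2))·(1/4)^n. -/

import Mathlib

open scoped BigOperators Classical

namespace P2834

/-- The ±1 value associated to a Boolean. -/
def signVal (b : Bool) : ℤ := if b then 1 else -1

/-- The Bernoulli ±1 matrix built from a Boolean matrix. -/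
def bmat {n : ℕ} (B : Fin n → Fin n → Bool) : Matrix (Fin n) (Fin n) ℤ :=
  fun i j => signVal (B i j)

/-- Probability of an event under the uniform distribution on `n × n` ±1 matrices. -/
noncomputable def Pr (n : ℕ) (E : Matrix (Fin n) (Fin n) ℤ → Prop) : ℝ :=
  (Finset.filter (fun B : Fin n → Fin n → Bool => E (bmat B)) Finset.univ).card / 2 ^ (n * n)

/-- Expectation of a real-valued function of a uniformly random `n × n` ±1 matrix. -/
noncomputable def Ex (n : ℕ) (f : Matrix (Fin n) (Fin n) ℤ → ℝ) : ℝ :=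
  (∑ B : Fin n → Fin n → Bool, f (bmat B)) / 2 ^ (n * n)

/-- `lam : Fin k → ℤ` is an integer partition with `k` parts:
nonincreasing, all parts at least 1. -/
def IsPartition {k : ℕ} (lam : Fin k → ℤ) : Prop :=
  (∀ i j : Fin k, i ≤ j → lam j ≤ lam i) ∧ ∀ i, 1 ≤ lam i

/-- The Bernoulli orthogonal complement of `v`: sign vectors (encoded as Boolean
vectors, `true ↦ +1`, `false ↦ -1`) orthogonal to `v`. -/
def perpB {k : ℕ} (v : Fin k → ℤ) : Finset (Fin k → Bool) :=
  Finset.filter (fun x => ∑ i, v i * signVal (x i) = 0) Finset.univ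

/-- `r_λ := |λ^{⊥B}| / 2^k`. -/
def rVal {k : ℕ} (lam : Fin k → ℤ) : ℚ := (perpB lam).card / 2 ^ k

/-- `V_λ`: all vectors obtained by permuting the parts of `λ` and attaching ± signs,
with the first coordinate positive. -/
def Vlam {k : ℕ} (lam : Fin k → ℤ) : Set (Fin k → ℤ) :=
  {v | (∃ (σ : Equiv.Perm (Fin k)) (ε : Fin k → ℤ),
          (∀ i, ε i = 1 ∨ ε i = -1) ∧ ∀ i, v i = ε i * lam (σ i)) ∧
        ∀ h : 0 < k, 0 < v ⟨0, h⟩}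

/-- `V_λ^{(n)}`: vectors of length `n` of template `λ`, obtained from elements of
`V_λ` by inserting `n - k` zero coordinates (via an order-preserving coordinate
injection). -/
def VlamN {k : ℕ} (lam : Fin k → ℤ) (n : ℕ) : Set (Fin n → ℤ) :=
  {w | ∃ (c : Fin k ↪o Fin n) (u : Fin k → ℤ), u ∈ Vlam lam ∧
        (∀ i, w (c i) = u i) ∧ ∀ j, (∀ i, c i ≠ j) → w j = 0}

/-- `μ` reduces to `λ` (`μ ⇒ λ`): there are a `k`-element subset `I` of the `m`
coordinates (given by an order embedding) and `v ∈ V_λ` with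
`Proj_I μ^{⊥B} ⊆ v^{⊥B}`.  (When `k = m` the only order embedding is the identity,
recovering the case `μ^{⊥B} ⊆ v^{⊥B}`.) -/
def Reduces {m k : ℕ} (mu : Fin m → ℤ) (lam : Fin k → ℤ) : Prop :=
  ∃ (I : Fin k ↪o Fin m) (v : Fin k → ℤ), v ∈ Vlam lam ∧
    ∀ x ∈ perpB mu, (fun i => x (I i)) ∈ perpB v

/-- Equivalence of templates: reduction in both directions. -/
def Equivp {m k : ℕ} (mu : Fin m → ℤ) (lam : Fin k → ℤ) : Prop :=
  Reduces mu lam ∧ Reduces lam mu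

/-- Strict reduction: `μ ⇒ λ` but not `λ ⇒ μ`. -/
def StrictReduces {m k : ℕ} (mu : Fin m → ℤ) (lam : Fin k → ℤ) : Prop :=
  Reduces mu lam ∧ ¬ Reduces lam mu

/-- Lexicographic comparison of integer vectors. -/
def lexLE {k : ℕ} (a b : Fin k → ℤ) : Prop :=
  a = b ∨ ∃ i, (∀ j, j < i → a j = b j) ∧ a i < b i

/-- A partition is novel iff it does not strictly reduce to any partition, and it is
lexicographically first among all partitions equivalent to it. -/
def Novel {k : ℕ} (lam : Fin k → ℤ) : Prop :=
  IsPartition lam ∧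
  (∀ (m : ℕ) (mu : Fin m → ℤ), IsPartition mu → ¬ StrictReduces lam mu) ∧
  (∀ mu : Fin k → ℤ, IsPartition mu → Equivp lam mu → lexLE lam mu)

/-- The event that `M` has a right null vector of template `λ`. -/
def Rev {k : ℕ} (lam : Fin k → ℤ) (n : ℕ) (M : Matrix (Fin n) (Fin n) ℤ) : Prop :=
  ∃ v ∈ VlamN lam n, M.mulVec v = 0

/-- The event that `M` has a left null vector of template `λ`. -/
def Lev {k : ℕ} (lam : Fin k → ℤ) (n : ℕ) (M : Matrix (Fin n) (Fin n) ℤ) : Prop :=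
  ∃ v ∈ VlamN lam n, Matrix.vecMul v M = 0

/-- `D_λ := R_λ ∪ L_λ`. -/
def Dev {k : ℕ} (lam : Fin k → ℤ) (n : ℕ) (M : Matrix (Fin n) (Fin n) ℤ) : Prop :=
  Rev lam n M ∨ Lev lam n M

/-- The partition `1^k`. -/
def onesP (k : ℕ) : Fin k → ℤ := fun _ => 1

/-- The partition `2·1^(k-1)`. -/
def twoOnesP (k : ℕ) : Fin k → ℤ := fun i => if i.val = 0 then 2 else 1


section Aux

open Finset

/-! ### Generic Bonferroni inequality -/

lemma two_mul_le_aux (k : ℕ) (hk : 1 ≤ k) : 2 * k ≤ 2 + k * (k - 1) := by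
  obtain ⟨j, rfl⟩ : ∃ j, k = j + 1 := ⟨k - 1, by omega⟩
  rcases Nat.eq_zero_or_pos j with rfl | hj
  · simp
  · have h : j ≤ j * j := Nat.le_mul_of_pos_left j hj
    simp only [Nat.add_sub_cancel]
    nlinarith

lemma card_as_sum {Ω : Type*} [Fintype Ω] [DecidableEq Ω] (S : Finset Ω) :
    S.card = ∑ ω : Ω, if ω ∈ S then 1 else 0 := by
  rw [← Finset.sum_filter, Finset.sum_const, smul_eq_mul, mul_one]
  congr 1
  ext ω; simp

lemma filter_card_as_sum {ι : Type*} (T : Finset ι) (p : ι → Prop) [DecidablePred p] :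
    (T.filter p).card = ∑ t ∈ T, if p t then 1 else 0 := by
  rw [Finset.card_eq_sum_ones, Finset.sum_filter]

lemma bonferroni {Ω ι : Type*} [Fintype Ω] [DecidableEq Ω] [DecidableEq ι] (T : Finset ι)
    (A : ι → Finset Ω) :
    2 * ∑ t ∈ T, (A t).card ≤
      2 * (T.biUnion A).card + ∑ t ∈ T, ∑ t' ∈ T.erase t, (A t ∩ A t').card := by
  classical
  have h1 : ∑ t ∈ T, (A t).card = ∑ ω : Ω, (T.filter (fun t => ω ∈ A t)).card := by
    have : ∀ t ∈ T, (A t).card = ∑ ω : Ω, if ω ∈ A t then 1 else 0 :=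
      fun t _ => card_as_sum (A t)
    rw [Finset.sum_congr rfl this, Finset.sum_comm]
    exact Finset.sum_congr rfl fun ω _ => (filter_card_as_sum T _).symm
  have h2 : (T.biUnion A).card = ∑ ω : Ω, if ω ∈ T.biUnion A then 1 else 0 :=
    card_as_sum _
  have h3 : ∑ t ∈ T, ∑ t' ∈ T.erase t, (A t ∩ A t').card
      = ∑ ω : Ω, (T.filter (fun t => ω ∈ A t)).card *
          ((T.filter (fun t => ω ∈ A t)).card - 1) := by
    have step1 : ∀ t ∈ T, ∑ t' ∈ T.erase t, (A t ∩ A t').card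
        = ∑ ω : Ω, (if ω ∈ A t then
            (∑ t' ∈ T.erase t, if ω ∈ A t' then 1 else 0) else 0) := by
      intro t _
      have : ∀ t' ∈ T.erase t, (A t ∩ A t').card
          = ∑ ω : Ω, (if ω ∈ A t then (if ω ∈ A t' then 1 else 0) else 0) := by
        intro t' _
        rw [card_as_sum (A t ∩ A t')]
        refine Finset.sum_congr rfl fun ω _ => ?_
        by_cases h : ω ∈ A t <;> by_cases h' : ω ∈ A t' <;> simp [h, h']
      rw [Finset.sum_congr rfl this, Finset.sum_comm]
      refine Finset.sum_congr rfl fun ω _ => ?_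
      by_cases h : ω ∈ A t <;> simp [h]
    rw [Finset.sum_congr rfl step1, Finset.sum_comm]
    refine Finset.sum_congr rfl fun ω _ => ?_
    have inner : ∀ t ∈ T, (if ω ∈ A t then
        (∑ t' ∈ T.erase t, if ω ∈ A t' then 1 else 0) else 0)
        = (if ω ∈ A t then ((T.filter (fun t => ω ∈ A t)).card - 1) else 0) := by
      intro t ht
      by_cases h : ω ∈ A t
      · rw [if_pos h, if_pos h, ← filter_card_as_sum, Finset.filter_erase,
          Finset.card_erase_of_mem (Finset.mem_filter.mpr ⟨ht, h⟩)]
      · rw [if_neg h, if_neg h]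
    rw [Finset.sum_congr rfl inner, ← Finset.sum_filter, Finset.sum_const, smul_eq_mul]
  rw [h1, h2, h3, Finset.mul_sum, Finset.mul_sum, ← Finset.sum_add_distrib]
  refine Finset.sum_le_sum fun ω _ => ?_
  by_cases hω : ω ∈ T.biUnion A
  · rw [if_pos hω]
    have hm : 1 ≤ (T.filter (fun t => ω ∈ A t)).card := by
      obtain ⟨t, ht, hA⟩ := Finset.mem_biUnion.mp hω
      exact Finset.card_pos.mpr ⟨t, Finset.mem_filter.mpr ⟨ht, hA⟩⟩
    calc 2 * (T.filter (fun t => ω ∈ A t)).card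
        ≤ 2 + (T.filter (fun t => ω ∈ A t)).card *
            ((T.filter (fun t => ω ∈ A t)).card - 1) := two_mul_le_aux _ hm
      _ = 2 * 1 + _ := by ring_nf
  · rw [if_neg hω]
    have hm : (T.filter (fun t => ω ∈ A t)).card = 0 := by
      rw [Finset.card_eq_zero, Finset.filter_eq_empty_iff]
      intro t ht hA
      exact hω (Finset.mem_biUnion.mpr ⟨t, ht, hA⟩)
    simp [hm]

end Aux
section Events

open Finset

/-- Column relation event: column `i` equals `xor s` of column `j`. -/
def colP (n : ℕ) (i j : Fin n) (s : Bool) (B : Fin n → Fin n → Bool) : Prop :=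
  ∀ x, B x i = xor s (B x j)

/-- Row relation event: row `a` equals `xor s` of row `b`. -/
def rowP (n : ℕ) (a b : Fin n) (s : Bool) (B : Fin n → Fin n → Bool) : Prop :=
  ∀ y, B a y = xor s (B b y)

lemma xor_flip {s c d : Bool} (h : c = xor s d) : d = xor s c := by
  subst h; cases s <;> cases d <;> rfl

lemma card_filter_univ {Ω : Type*} [Fintype Ω] (p : Ω → Prop) [DecidablePred p] :
    (Finset.univ.filter p).card = Fintype.card {B : Ω // p B} := by
  rw [Fintype.card_subtype]

/-- Transposition of boolean matrices, as an equivalence. -/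
def tr (n : ℕ) : (Fin n → Fin n → Bool) ≃ (Fin n → Fin n → Bool) where
  toFun B := fun x y => B y x
  invFun B := fun x y => B y x
  left_inv B := rfl
  right_inv B := rfl

def rowEquiv (n : ℕ) (a b : Fin n) (hab : a ≠ b) (s : Bool) :
    {B : Fin n → Fin n → Bool // rowP n a b s B} ≃ ({x : Fin n // x ≠ a} → Fin n → Bool) where
  toFun B := fun x y => B.1 x.1 y
  invFun G := ⟨fun x y => if h : x = a then xor s (G ⟨b, Ne.symm hab⟩ y) else G ⟨x, h⟩ y, by
    intro y
    simp [Ne.symm hab]⟩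
  left_inv B := by
    apply Subtype.ext
    funext x y
    by_cases h : x = a
    · subst h
      simp only [dif_pos]
      exact (B.2 y).symm
    · simp only [dif_neg h]
  right_inv G := by
    funext x y
    rcases x with ⟨x, hx⟩
    simp only [dif_neg hx]

lemma card_ne_one {n : ℕ} (a : Fin n) : Fintype.card {x : Fin n // x ≠ a} = n - 1 := by
  classical
  rw [Fintype.card_subtype]
  have h : Finset.univ.filter (fun x : Fin n => x ≠ a) = Finset.univ \ {a} := by
    ext x; simp
  rw [h, Finset.card_sdiff_of_subset (by simp), Finset.card_singleton, Finset.card_univ, Fintype.card_fin]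

lemma card_ne_two {n : ℕ} (a b : Fin n) (hab : a ≠ b) :
    Fintype.card {y : Fin n // y ≠ a ∧ y ≠ b} = n - 2 := by
  classical
  rw [Fintype.card_subtype]
  have h : Finset.univ.filter (fun y : Fin n => y ≠ a ∧ y ≠ b) = Finset.univ \ {a, b} := by
    ext x; simp [not_or]
  rw [h, Finset.card_sdiff_of_subset (by simp), Finset.card_univ, Fintype.card_fin]
  congr 1
  rw [Finset.card_insert_of_notMem (by simp [hab]), Finset.card_singleton]

lemma card_rowP {n : ℕ} (a b : Fin n) (hab : a ≠ b) (s : Bool) :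
    (Finset.univ.filter (rowP n a b s)).card = 2 ^ (n * (n - 1)) := by
  rw [card_filter_univ, Fintype.card_congr (rowEquiv n a b hab s), Fintype.card_fun,
    card_ne_one, Fintype.card_fun, Fintype.card_bool, Fintype.card_fin, ← pow_mul]

lemma card_colP {n : ℕ} (i j : Fin n) (hij : i ≠ j) (s : Bool) :
    (Finset.univ.filter (colP n i j s)).card = 2 ^ (n * (n - 1)) := by
  rw [card_filter_univ,
    Fintype.card_congr (Equiv.subtypeEquiv (tr n) (fun B => Iff.rfl) :
      {B // colP n i j s B} ≃ {B // rowP n i j s B}),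
    ← card_filter_univ, card_rowP i j hij s]

lemma card_le_two_cols {n : ℕ} (p : (Fin n → Fin n → Bool) → Prop) [DecidablePred p]
    (a b : Fin n) (hab : a ≠ b)
    (hdet : ∀ B B', p B → p B' → (∀ x y, y ≠ a → y ≠ b → B x y = B' x y) → B = B') :
    (Finset.univ.filter p).card ≤ 2 ^ (n * (n - 2)) := by
  rw [card_filter_univ]
  have hinj : Function.Injective
      (fun (B : {B : Fin n → Fin n → Bool // p B}) =>
        (fun x (y : {y : Fin n // y ≠ a ∧ y ≠ b}) => B.1 x y.1)) := by
    intro B B' h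
    apply Subtype.ext
    exact hdet _ _ B.2 B'.2 fun x y hy1 hy2 => congrFun (congrFun h x) ⟨y, hy1, hy2⟩
  have hle := Fintype.card_le_of_injective _ hinj
  rwa [Fintype.card_fun, Fintype.card_fun, card_ne_two a b hab, Fintype.card_bool,
    Fintype.card_fin, ← pow_mul, Nat.mul_comm (n - 2) n] at hle

lemma card_le_row_col {n : ℕ} (p : (Fin n → Fin n → Bool) → Prop) [DecidablePred p]
    (a i : Fin n)
    (hdet : ∀ B B', p B → p B' → (∀ x y, x ≠ a → y ≠ i → B x y = B' x y) → B = B') :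
    (Finset.univ.filter p).card ≤ 2 ^ ((n - 1) * (n - 1)) := by
  rw [card_filter_univ]
  have hinj : Function.Injective
      (fun (B : {B : Fin n → Fin n → Bool // p B}) =>
        (fun (x : {x : Fin n // x ≠ a}) (y : {y : Fin n // y ≠ i}) => B.1 x.1 y.1)) := by
    intro B B' h
    apply Subtype.ext
    exact hdet _ _ B.2 B'.2 fun x y hx hy => congrFun (congrFun h ⟨x, hx⟩) ⟨y, hy⟩
  have hle := Fintype.card_le_of_injective _ hinj
  rwa [Fintype.card_fun, Fintype.card_fun, card_ne_one, card_ne_one, Fintype.card_bool,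
    ← pow_mul] at hle

lemma inter_cross {n : ℕ} (i j a b : Fin n) (hji : j ≠ i) (hba : b ≠ a) (s t : Bool) :
    (Finset.univ.filter (fun B => colP n i j s B ∧ rowP n a b t B)).card
      ≤ 2 ^ ((n - 1) * (n - 1)) := by
  apply card_le_row_col _ a i
  rintro B B' ⟨hc, hr⟩ ⟨hc', hr'⟩ h
  have key : ∀ x, x ≠ a → ∀ y, B x y = B' x y := by
    intro x hx y
    by_cases hy : y = i
    · subst hy
      rw [hc x, hc' x, h x j hx hji]
    · exact h x y hx hy
  funext x y
  by_cases hx : x = a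
  · subst hx
    rw [hr y, hr' y, key b hba y]
  · exact key x hx y

lemma inter_colcol {n : ℕ} (i j i' j' : Fin n) (s s' : Bool) (hij : i < j) (hij' : i' < j')
    (hne : ¬(i = i' ∧ j = j')) :
    (Finset.univ.filter (fun B => colP n i j s B ∧ colP n i' j' s' B)).card
      ≤ 2 ^ (n * (n - 2)) := by
  by_cases hii : i = i'
  · subst hii
    have hjj : j ≠ j' := fun h => hne ⟨rfl, h⟩
    apply card_le_two_cols _ i j hij.ne
    rintro B B' ⟨hc, hd⟩ ⟨hc', hd'⟩ h
    have hcolj' : ∀ x, B x j' = B' x j' := fun x => h x j' hij'.ne' (Ne.symm hjj)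
    have hcoli : ∀ x, B x i = B' x i := fun x => by rw [hd x, hd' x, hcolj' x]
    have hcolj : ∀ x, B x j = B' x j := fun x => by
      rw [xor_flip (hc x), xor_flip (hc' x), hcoli x]
    funext x y
    by_cases h1 : y = i
    · subst h1; exact hcoli x
    by_cases h2 : y = j
    · subst h2; exact hcolj x
    exact h x y h1 h2
  · apply card_le_two_cols _ i i' hii
    rintro B B' ⟨hc, hd⟩ ⟨hc', hd'⟩ h
    by_cases hj'i : j' = i
    · have hji' : j ≠ i' := by
        rintro rfl
        exact absurd (hij.trans (hj'i ▸ hij')) (lt_irrefl i)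
      have hcolj : ∀ x, B x j = B' x j := fun x => h x j hij.ne' hji'
      have hcoli : ∀ x, B x i = B' x i := fun x => by rw [hc x, hc' x, hcolj x]
      have hcolj'2 : ∀ x, B x j' = B' x j' := fun x => hj'i ▸ hcoli x
      have hcoli' : ∀ x, B x i' = B' x i' := fun x => by rw [hd x, hd' x, hcolj'2 x]
      funext x y
      by_cases h1 : y = i
      · subst h1; exact hcoli x
      by_cases h2 : y = i'
      · subst h2; exact hcoli' x
      exact h x y h1 h2
    · have hcolj' : ∀ x, B x j' = B' x j' := fun x => h x j' hj'i hij'.ne'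
      have hcoli' : ∀ x, B x i' = B' x i' := fun x => by rw [hd x, hd' x, hcolj' x]
      have hcolj : ∀ x, B x j = B' x j := by
        intro x
        by_cases hji' : j = i'
        · exact hji' ▸ hcoli' x
        · exact h x j hij.ne' hji'
      have hcoli : ∀ x, B x i = B' x i := fun x => by rw [hc x, hc' x, hcolj x]
      funext x y
      by_cases h1 : y = i
      · subst h1; exact hcoli x
      by_cases h2 : y = i'
      · subst h2; exact hcoli' x
      exact h x y h1 h2

lemma inter_rowrow {n : ℕ} (a b a' b' : Fin n) (s s' : Bool) (hab : a < b) (hab' : a' < b')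
    (hne : ¬(a = a' ∧ b = b')) :
    (Finset.univ.filter (fun B => rowP n a b s B ∧ rowP n a' b' s' B)).card
      ≤ 2 ^ (n * (n - 2)) := by
  rw [card_filter_univ,
    Fintype.card_congr (Equiv.subtypeEquiv (tr n) (fun B => Iff.rfl) :
      {B // rowP n a b s B ∧ rowP n a' b' s' B} ≃ {B // colP n a b s B ∧ colP n a' b' s' B}),
    ← card_filter_univ]
  exact inter_colcol a b a' b' s s' hab hab' hne

lemma inter_col_empty {n : ℕ} (hn : 0 < n) (i j : Fin n) (s s' : Bool) (hss : s ≠ s') :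
    (Finset.univ.filter (fun B => colP n i j s B ∧ colP n i j s' B)) = ∅ := by
  rw [Finset.filter_eq_empty_iff]
  rintro B - ⟨h1, h2⟩
  have h := (h1 ⟨0, hn⟩).symm.trans (h2 ⟨0, hn⟩)
  cases s <;> cases s' <;> simp_all

lemma inter_row_empty {n : ℕ} (hn : 0 < n) (a b : Fin n) (s s' : Bool) (hss : s ≠ s') :
    (Finset.univ.filter (fun B => rowP n a b s B ∧ rowP n a b s' B)) = ∅ := by
  rw [Finset.filter_eq_empty_iff]
  rintro B - ⟨h1, h2⟩
  have h := (h1 ⟨0, hn⟩).symm.trans (h2 ⟨0, hn⟩)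
  cases s <;> cases s' <;> simp_all

end Events
section Semantics

open Finset

lemma colP_rev {n : ℕ} {i j : Fin n} (hij : i < j) (s : Bool) {B : Fin n → Fin n → Bool}
    (h : colP n i j s B) : Rev (onesP 2) n (bmat B) := by
  classical
  set e : ℤ := if s then 1 else -1 with he
  have hmono : StrictMono (![i, j] : Fin 2 → Fin n) := by
    intro a b hab
    fin_cases a <;> fin_cases b <;> simp_all
  refine ⟨fun y => if y = i then 1 else if y = j then e else 0, ?_, ?_⟩
  · refine ⟨OrderEmbedding.ofStrictMono ![i, j] hmono, ![1, e],
      ⟨⟨Equiv.refl _, ![1, e], ?_, ?_⟩, ?_⟩, ?_, ?_⟩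
    · intro x
      fin_cases x
      · left; rfl
      · cases s <;> simp [he]
    · intro x
      simp [onesP]
    · intro h0
      show (0:ℤ) < ![1, e] ⟨0, h0⟩
      norm_num
    · intro x
      fin_cases x <;> simp [OrderEmbedding.coe_ofStrictMono, hij.ne, hij.ne']
    · intro y hy
      have h0 := hy 0
      have h1 := hy 1
      simp only [OrderEmbedding.coe_ofStrictMono, Matrix.cons_val_zero, Matrix.cons_val_one,
        Matrix.head_cons] at h0 h1
      show (if y = i then (1:ℤ) else if y = j then e else 0) = 0
      rw [if_neg (fun hh => h0 hh.symm), if_neg (fun hh => h1 hh.symm)]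
  · funext x
    show ∑ y, bmat B x y * _ = 0
    have hsplit : ∀ y : Fin n,
        bmat B x y * (if y = i then 1 else if y = j then e else 0)
          = (if y = i then bmat B x y else 0) + (if y = j then bmat B x y * e else 0) := by
      intro y
      by_cases h1 : y = i
      · subst h1
        rw [if_pos rfl, if_pos rfl, if_neg hij.ne, mul_one, add_zero]
      · rw [if_neg h1, if_neg h1]
        by_cases h2 : y = j
        · subst h2
          rw [if_pos rfl, if_pos rfl, zero_add]
        · rw [if_neg h2, if_neg h2, mul_zero, add_zero]
    rw [Finset.sum_congr rfl fun y _ => hsplit y, Finset.sum_add_distrib,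
      Fintype.sum_ite_eq' i (fun y => bmat B x y),
      Fintype.sum_ite_eq' j (fun y => bmat B x y * e)]
    show signVal (B x i) + signVal (B x j) * e = 0
    rw [h x]
    cases s <;> cases B x j <;> norm_num [signVal, he]

lemma rowP_lev {n : ℕ} {a b : Fin n} (hab : a < b) (s : Bool) {B : Fin n → Fin n → Bool}
    (h : rowP n a b s B) : Lev (onesP 2) n (bmat B) := by
  have hc : colP n a b s (tr n B) := h
  obtain ⟨v, hv, hmul⟩ := colP_rev hab s hc
  refine ⟨v, hv, ?_⟩
  have htr : bmat (tr n B) = (bmat B).transpose := rfl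
  rw [htr, Matrix.mulVec_transpose] at hmul
  exact hmul

lemma vlam_ne_zero {n : ℕ} {v : Fin n → ℤ} (hv : v ∈ VlamN (onesP 2) n) : v ≠ 0 := by
  obtain ⟨c, u, ⟨-, hpos⟩, hcu, -⟩ := hv
  intro h0
  have h2 := hpos (by norm_num)
  rw [← hcu ⟨0, by norm_num⟩, h0] at h2
  simp at h2

lemma dev_det {n : ℕ} {M : Matrix (Fin n) (Fin n) ℤ} (h : Dev (onesP 2) n M) : M.det = 0 := by
  rcases h with ⟨v, hv, hm⟩ | ⟨v, hv, hm⟩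
  · exact Matrix.exists_mulVec_eq_zero_iff.mp ⟨v, vlam_ne_zero hv, hm⟩
  · exact Matrix.exists_vecMul_eq_zero_iff.mp ⟨v, vlam_ne_zero hv, hm⟩

end Semantics
section Pairs

open Finset

lemma two_mul_choose_two (k : ℕ) : 2 * Nat.choose (k + 1) 2 = (k + 1) * k := by
  induction k with
  | zero => rfl
  | succ l ih =>
    rw [Nat.choose_succ_succ (l + 1) 1, Nat.mul_add, ih, Nat.choose_one_right]
    ring

lemma card_lt_pairs (k : ℕ) :
    2 * ((Finset.univ : Finset (Fin k × Fin k)).filter fun p => p.1 < p.2).card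
      = k * k - k := by
  classical
  have hswap : ((Finset.univ : Finset (Fin k × Fin k)).filter fun p => p.1 < p.2).card
      = ((Finset.univ : Finset (Fin k × Fin k)).filter fun p => p.2 < p.1).card := by
    apply Finset.card_bij (fun p _ => (p.2, p.1))
    · intro p hp
      simp only [Finset.mem_filter, Finset.mem_univ, true_and] at *
      exact hp
    · intro p hp q hq h
      rw [Prod.ext_iff] at h ⊢
      exact ⟨h.2, h.1⟩
    · intro q hq
      refine ⟨(q.2, q.1), ?_, rfl⟩
      simp only [Finset.mem_filter, Finset.mem_univ, true_and] at *
      exact hq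
  have hdisj : Disjoint
      ((Finset.univ : Finset (Fin k × Fin k)).filter fun p => p.1 < p.2)
      ((Finset.univ : Finset (Fin k × Fin k)).filter fun p => p.2 < p.1) := by
    rw [Finset.disjoint_left]
    intro p hp hq
    rw [Finset.mem_filter] at hp hq
    exact absurd (hp.2.trans hq.2) (lt_irrefl _)
  have hunion : ((Finset.univ : Finset (Fin k × Fin k)).filter fun p => p.1 < p.2)
      ∪ ((Finset.univ : Finset (Fin k × Fin k)).filter fun p => p.2 < p.1)
      = (Finset.univ : Finset (Fin k)).offDiag := by
    ext p
    simp only [Finset.mem_union, Finset.mem_filter, Finset.mem_univ, true_and,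
      Finset.mem_offDiag]
    constructor
    · rintro (h | h)
      · exact h.ne
      · exact h.ne'
    · exact fun h => lt_or_gt_of_ne h
  have hcard := Finset.card_union_of_disjoint hdisj
  rw [hunion, Finset.offDiag_card, Finset.card_univ, Fintype.card_fin, ← hswap] at hcard
  omega

end Pairs
lemma Pr_mono {n : ℕ} {E F : Matrix (Fin n) (Fin n) ℤ → Prop}
    (h : ∀ M, E M → F M) : Pr n F ≥ Pr n E := by
  rw [ge_iff_le]
  unfold Pr
  gcongr
  intro hB
  exact h _ hB
/-- lower bound `P_n ≥ P(D_{11}) ≥ 4 C(n,2) (1/2)^n - (12 C(n,2)^2 - 4 C(n,2)) (1/4)^n`. -/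
theorem stmt0 (n : ℕ) (hn : 2 ≤ n) :
    Pr n (fun M => M.det = 0) ≥ Pr n (Dev (onesP 2) n) ∧
    Pr n (Dev (onesP 2) n) ≥
      4 * (n.choose 2 : ℝ) * (1 / 2) ^ n -
        (12 * (n.choose 2 : ℝ) ^ 2 - 4 * (n.choose 2 : ℝ)) * (1 / 4) ^ n := by
  classical
  obtain ⟨m, rfl⟩ : ∃ m, n = m + 2 := ⟨n - 2, by omega⟩
  clear hn
  set P : Finset (Fin (m+2) × Fin (m+2)) :=
    Finset.univ.filter (fun p => p.1 < p.2) with hPdef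
  set T : Finset (Bool × (Fin (m+2) × Fin (m+2)) × Bool) :=
    Finset.univ ×ˢ (P ×ˢ Finset.univ) with hTdef
  set A : Bool × (Fin (m+2) × Fin (m+2)) × Bool → Finset (Fin (m+2) → Fin (m+2) → Bool) :=
    (fun t => Finset.univ.filter
      (fun B => cond t.1 (rowP (m+2) t.2.1.1 t.2.1.2 t.2.2 B)
                         (colP (m+2) t.2.1.1 t.2.1.2 t.2.2 B))) with hAdef
  set X : ℕ := 2 ^ ((m+1) * (m+1)) with hX
  set Y : ℕ := 2 ^ ((m+2) * m) with hY
  have hmemP : ∀ q : Fin (m+2) × Fin (m+2), q ∈ P ↔ q.1 < q.2 := by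
    intro q; rw [hPdef]; simp
  have hmemT : ∀ t : Bool × (Fin (m+2) × Fin (m+2)) × Bool, t ∈ T ↔ t.2.1 ∈ P := by
    intro t; rw [hTdef]; simp [Finset.mem_product]
  have hTcard : T.card = 4 * P.card := by
    rw [hTdef, Finset.card_product, Finset.card_product]
    simp [Finset.card_univ]
    omega
  -- cardinality of each event
  have hcardA : ∀ t ∈ T, (A t).card = 2 ^ ((m+2) * (m+1)) := by
    rintro ⟨r, ⟨i, j⟩, s⟩ ht
    have hij : i < j := (hmemP _).mp ((hmemT _).mp ht)
    rw [hAdef]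
    cases r
    · exact card_colP i j hij.ne s
    · exact card_rowP i j hij.ne s
  have hsum1 : ∑ t ∈ T, (A t).card = (4 * P.card) * 2 ^ ((m+2) * (m+1)) := by
    rw [Finset.sum_congr rfl hcardA, Finset.sum_const, smul_eq_mul, hTcard]
  -- the union is contained in the event D
  have hsub : T.biUnion A ⊆
      Finset.univ.filter (fun B => Dev (onesP 2) (m+2) (bmat B)) := by
    intro B hB
    obtain ⟨t, ht, hBt⟩ := Finset.mem_biUnion.mp hB
    obtain ⟨r, ⟨i, j⟩, s⟩ := t
    have hij : i < j := (hmemP _).mp ((hmemT _).mp ht)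
    rw [hAdef, Finset.mem_filter] at hBt
    rw [Finset.mem_filter]
    refine ⟨Finset.mem_univ _, ?_⟩
    cases r
    · exact Or.inl (colP_rev hij s hBt.2)
    · exact Or.inr (rowP_lev hij s hBt.2)
  -- pairwise intersection bounds
  have hH : ∀ t ∈ T, ∀ t' ∈ T, t ≠ t' →
      (A t ∩ A t').card ≤ (if t.1 = t'.1 then (if t.2.1 = t'.2.1 then 0 else Y) else X) := by
    rintro ⟨r, ⟨i, j⟩, s⟩ ht ⟨r', ⟨i', j'⟩, s'⟩ ht' hne
    have hij : i < j := (hmemP _).mp ((hmemT _).mp ht)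
    have hij' : i' < j' := (hmemP _).mp ((hmemT _).mp ht')
    rw [hAdef]
    dsimp only
    have hget : ∀ (p q : (Fin (m+2) → Fin (m+2) → Bool) → Prop)
        (inst : DecidablePred p) (inst' : DecidablePred q) (B : Fin (m+2) → Fin (m+2) → Bool),
        B ∈ (@Finset.filter _ p inst Finset.univ) ∩ (@Finset.filter _ q inst' Finset.univ) →
          p B ∧ q B := by
      intro p q inst inst' B hB
      exact ⟨(Finset.mem_filter.mp (Finset.mem_inter.mp hB).1).2,
        (Finset.mem_filter.mp (Finset.mem_inter.mp hB).2).2⟩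
    cases r <;> cases r'
    · -- col-col
      rw [if_pos rfl]
      by_cases hq : ((i, j) : Fin (m+2) × Fin (m+2)) = (i', j')
      · rw [if_pos hq]
        have hi : i = i' := congrArg Prod.fst hq
        have hj : j = j' := congrArg Prod.snd hq
        subst hi; subst hj
        have hs : s ≠ s' := by
          rintro rfl; exact hne rfl
        have h0 := congrArg Finset.card (inter_col_empty (n := m+2) (by omega) i j s s' hs)
        rw [Finset.card_empty] at h0
        refine le_trans (Finset.card_le_card fun B hB => Finset.mem_filter.mpr
          ⟨Finset.mem_univ _, (hget _ _ _ _ B hB).1, (hget _ _ _ _ B hB).2⟩) h0.le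
      · rw [if_neg hq]
        refine le_trans (Finset.card_le_card fun B hB => Finset.mem_filter.mpr
          ⟨Finset.mem_univ _, (hget _ _ _ _ B hB).1, (hget _ _ _ _ B hB).2⟩)
          (le_trans (inter_colcol i j i' j' s s' hij hij'
            (fun hc => hq (by rw [hc.1, hc.2]))) (le_of_eq (by rw [hY]; norm_num)))
    · -- col-row
      rw [if_neg (by simp)]
      refine le_trans (Finset.card_le_card fun B hB => Finset.mem_filter.mpr
        ⟨Finset.mem_univ _, (hget _ _ _ _ B hB).1, (hget _ _ _ _ B hB).2⟩)
        (le_trans (inter_cross i j i' j' hij.ne' hij'.ne' s s')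
          (le_of_eq (by rw [hX]; norm_num)))
    · -- row-col
      rw [if_neg (by simp)]
      refine le_trans (Finset.card_le_card fun B hB => Finset.mem_filter.mpr
        ⟨Finset.mem_univ _, (hget _ _ _ _ B hB).2, (hget _ _ _ _ B hB).1⟩)
        (le_trans (inter_cross i' j' i j hij'.ne' hij.ne' s' s)
          (le_of_eq (by rw [hX]; norm_num)))
    · -- row-row
      rw [if_pos rfl]
      by_cases hq : ((i, j) : Fin (m+2) × Fin (m+2)) = (i', j')
      · rw [if_pos hq]
        have hi : i = i' := congrArg Prod.fst hq
        have hj : j = j' := congrArg Prod.snd hq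
        subst hi; subst hj
        have hs : s ≠ s' := by
          rintro rfl; exact hne rfl
        have h0 := congrArg Finset.card (inter_row_empty (n := m+2) (by omega) i j s s' hs)
        rw [Finset.card_empty] at h0
        refine le_trans (Finset.card_le_card fun B hB => Finset.mem_filter.mpr
          ⟨Finset.mem_univ _, (hget _ _ _ _ B hB).1, (hget _ _ _ _ B hB).2⟩) h0.le
      · rw [if_neg hq]
        refine le_trans (Finset.card_le_card fun B hB => Finset.mem_filter.mpr
          ⟨Finset.mem_univ _, (hget _ _ _ _ B hB).1, (hget _ _ _ _ B hB).2⟩)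
          (le_trans (inter_rowrow i j i' j' s s' hij hij'
            (fun hc => hq (by rw [hc.1, hc.2]))) (le_of_eq (by rw [hY]; norm_num)))
  -- inner sum of the bound
  have hinner : ∀ t ∈ T, (∑ t' ∈ T,
      (if t.1 = t'.1 then (if t.2.1 = t'.2.1 then 0 else Y) else X))
      = 2 * ((P.card - 1) * Y) + 2 * (P.card * X) := by
    rintro ⟨r, q, s⟩ ht
    have hq : q ∈ P := (hmemT _).mp ht
    dsimp only
    rw [hTdef, Finset.sum_product]
    have step : ∀ r' : Bool, (∑ z ∈ P ×ˢ (Finset.univ : Finset Bool),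
        (if r = r' then (if q = z.1 then (0:ℕ) else Y) else X))
        = if r = r' then 2 * ((P.card - 1) * Y) else 2 * (P.card * X) := by
      intro r'
      rw [Finset.sum_product]
      by_cases hr : r = r'
      · simp only [if_pos hr]
        have hbool : ∀ q' ∈ P, (∑ _s' ∈ (Finset.univ : Finset Bool),
            (if q = q' then (0:ℕ) else Y)) = 2 * (if q = q' then 0 else Y) := by
          intro q' _
          rw [Finset.sum_const, Finset.card_univ, Fintype.card_bool, smul_eq_mul]
        rw [Finset.sum_congr rfl hbool, ← Finset.mul_sum]
        congr 1
        have h2 : ∑ q' ∈ P.erase q, (if q = q' then (0:ℕ) else Y)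
            = ∑ _q' ∈ P.erase q, Y :=
          Finset.sum_congr rfl fun q' hq' => if_neg (Ne.symm (Finset.ne_of_mem_erase hq'))
        conv_lhs => rw [← Finset.insert_erase hq]
        rw [Finset.sum_insert (Finset.notMem_erase _ _), if_pos rfl, zero_add, h2,
          Finset.sum_const, Finset.card_erase_of_mem hq, smul_eq_mul]
      · simp only [if_neg hr]
        rw [Finset.sum_const, Finset.sum_const, Finset.card_univ, Fintype.card_bool,
          smul_eq_mul, smul_eq_mul]
        ring
    rw [Finset.sum_congr rfl (fun r' _ => step r'), Fintype.sum_bool]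
    cases r
    · rw [if_neg (by simp), if_pos rfl]
      exact Nat.add_comm _ _
    · rw [if_pos rfl, if_neg (by simp)]
  -- sum of pairwise intersections
  have hS2 : ∑ t ∈ T, ∑ t' ∈ T.erase t, (A t ∩ A t').card
      ≤ (4 * P.card) * (2 * ((P.card - 1) * Y) + 2 * (P.card * X)) := by
    have hb1 : ∀ t ∈ T, ∑ t' ∈ T.erase t, (A t ∩ A t').card
        ≤ 2 * ((P.card - 1) * Y) + 2 * (P.card * X) := by
      intro t ht
      calc ∑ t' ∈ T.erase t, (A t ∩ A t').card
          ≤ ∑ t' ∈ T.erase t,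
              (if t.1 = t'.1 then (if t.2.1 = t'.2.1 then 0 else Y) else X) :=
            Finset.sum_le_sum fun t' ht' => hH t ht t' (Finset.mem_of_mem_erase ht')
              (Ne.symm (Finset.ne_of_mem_erase ht'))
        _ ≤ ∑ t' ∈ T, (if t.1 = t'.1 then (if t.2.1 = t'.2.1 then 0 else Y) else X) :=
            Finset.sum_le_sum_of_subset (Finset.erase_subset _ _)
        _ = _ := hinner t ht
    calc ∑ t ∈ T, ∑ t' ∈ T.erase t, (A t ∩ A t').card
        ≤ ∑ _t ∈ T, (2 * ((P.card - 1) * Y) + 2 * (P.card * X)) := Finset.sum_le_sum hb1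
      _ = (4 * P.card) * (2 * ((P.card - 1) * Y) + 2 * (P.card * X)) := by
          rw [Finset.sum_const, smul_eq_mul, hTcard]
  -- master inequality over ℕ
  have master := bonferroni T A
  rw [hsum1] at master
  have hUD : (T.biUnion A).card
      ≤ (Finset.univ.filter (fun B => Dev (onesP 2) (m+2) (bmat B))).card :=
    Finset.card_le_card hsub
  have masterN : 2 * ((4 * P.card) * 2 ^ ((m+2) * (m+1)))
      ≤ 2 * (Finset.univ.filter (fun B => Dev (onesP 2) (m+2) (bmat B))).card
        + (4 * P.card) * (2 * ((P.card - 1) * Y) + 2 * (P.card * X)) :=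
    le_trans master (Nat.add_le_add (Nat.mul_le_mul_left 2 hUD) hS2)
  -- counting facts
  have hC1 : 1 ≤ P.card := by
    refine Finset.card_pos.mpr ⟨(⟨0, by omega⟩, ⟨1, by omega⟩), (hmemP _).mpr ?_⟩
    exact Fin.mk_lt_mk.mpr Nat.zero_lt_one
  have hCeq : (m+2).choose 2 = P.card := by
    have h1 := two_mul_choose_two (m+1)
    have h2 := card_lt_pairs (m+2)
    rw [← hPdef] at h2
    have h3 : (m+2) * (m+2) = (m+2) * (m+1) + (m+2) := by ring
    rw [h3, Nat.add_sub_cancel] at h2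
    have h4 : 2 * (m+2).choose 2 = 2 * P.card := by rw [h1, h2]
    omega
  -- go to the reals
  rw [hX, hY] at masterN
  have masterR : 2 * ((4 * (P.card : ℝ)) * 2 ^ ((m+2) * (m+1)))
      ≤ 2 * ((Finset.univ.filter (fun B => Dev (onesP 2) (m+2) (bmat B))).card : ℝ)
        + (4 * (P.card : ℝ)) * (2 * (((P.card : ℝ) - 1) * 2 ^ ((m+2) * m))
            + 2 * ((P.card : ℝ) * 2 ^ ((m+1) * (m+1)))) := by
    have h := masterN
    zify [hC1] at h
    exact_mod_cast h
  have e3 : (2:ℝ) ^ ((m+1) * (m+1)) = 2 * 2 ^ ((m+2) * m) := by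
    rw [show (m+1) * (m+1) = (m+2) * m + 1 by ring, pow_succ, mul_comm]
  rw [e3] at masterR
  have hCcast : ((m+2).choose 2 : ℝ) = (P.card : ℝ) := by exact_mod_cast hCeq
  constructor
  · -- P_n ≥ P(D)
    exact Pr_mono (fun M hM => dev_det hM)
  · rw [ge_iff_le]
    unfold Pr
    rw [le_div_iff₀ (by positivity)]
    have hone2 : ((1:ℝ)/2) ^ (m+2) * 2 ^ (m+2) = 1 := by
      rw [← mul_pow]
      norm_num
    have hone4 : ((1:ℝ)/4) ^ (m+2) * 4 ^ (m+2) = 1 := by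
      rw [← mul_pow]
      norm_num
    have e1 : ((1:ℝ)/2) ^ (m+2) * 2 ^ ((m+2) * (m+2)) = 2 ^ ((m+2) * (m+1)) := by
      have hsplit : (2:ℝ) ^ ((m+2) * (m+2)) = 2 ^ (m+2) * 2 ^ ((m+2) * (m+1)) := by
        rw [← pow_add]
        congr 1
        ring
      rw [hsplit, ← mul_assoc, hone2, one_mul]
    have e2 : ((1:ℝ)/4) ^ (m+2) * 2 ^ ((m+2) * (m+2)) = 2 ^ ((m+2) * m) := by
      have hsplit : (2:ℝ) ^ ((m+2) * (m+2)) = 4 ^ (m+2) * 2 ^ ((m+2) * m) := by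
        have h42 : (4:ℝ) = 2 ^ 2 := by norm_num
        rw [h42, ← pow_mul, ← pow_add]
        congr 1
        ring
      rw [hsplit, ← mul_assoc, hone4, one_mul]
    rw [hCcast]
    calc (4 * (P.card : ℝ) * (1/2) ^ (m+2)
          - (12 * (P.card : ℝ) ^ 2 - 4 * (P.card : ℝ)) * (1/4) ^ (m+2)) * 2 ^ ((m+2) * (m+2))
        = 4 * (P.card : ℝ) * 2 ^ ((m+2) * (m+1))
          - (12 * (P.card : ℝ) ^ 2 - 4 * (P.card : ℝ)) * 2 ^ ((m+2) * m) := by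
          linear_combination (4 * (P.card : ℝ)) * e1
            - (12 * (P.card : ℝ) ^ 2 - 4 * (P.card : ℝ)) * e2
      _ ≤ ((Finset.univ.filter (fun B => Dev (onesP 2) (m+2) (bmat B))).card : ℝ) := by
          nlinarith [masterR]

end P2834
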